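/- Let G be an X-generated group and let F be an X-generated F-inverse monoid such that there is a canonical morphism ν : G → F/σ (i.e., ν is a group morphism sending x_G to the σ-class of x_F for every x ∈ X). Then there is a canonical morphism φ : F(G) → F of F-inverse monoids (preserving ·, ⁻¹, m and 1, and sending (Γ_x, x_G) to x_F for every x ∈ X) such that the square commutes: for every (Γ,g) ∈ F(G), the σ-class of φ(Γ,g) in F/σ equals ν(g). -/

import Mathlib

namespace FInvPaper

universe u v w

section Generic
variable {S : Type u}

/-- The natural partial order on an inverse monoid: `a ≤ b` iff `a = b·e` for some idempotent. -/
def nle [Mul S] (a b : S) : Prop := ∃ e : S, e * e = e ∧ a = b * e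

/-- The minimum group congruence σ: `a σ b` iff `a·e = b·e` for some idempotent `e`. -/
def sigma [Mul S] (a b : S) : Prop := ∃ e : S, e * e = e ∧ a * e = b * e

/-- `m` assigns to every element the maximum element of its σ-class. -/
def IsMaxOp [Mul S] (m : S → S) : Prop :=
  ∀ a : S, sigma (m a) a ∧ ∀ b : S, sigma b a → nle b (m a)

/-- A subset of `S` which is an entire σ-class. -/
def IsSigmaClass [Mul S] (A : Set S) : Prop := ∃ a : S, A = {b : S | sigma b a}

end Generic

/-- Inverse monoids: monoids with an involution satisfying `a·a⁻¹·a = a`, `(a·b)⁻¹ = b⁻¹·a⁻¹`,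
in which all idempotents commute. -/
class InverseMonoid (S : Type u) extends Monoid S, Inv S where
  inv_inv : ∀ a : S, a⁻¹⁻¹ = a
  mul_inv_rev : ∀ a b : S, (a * b)⁻¹ = b⁻¹ * a⁻¹
  mul_inv_self_mul : ∀ a : S, a * a⁻¹ * a = a
  idem_comm : ∀ e f : S, e * e = e → f * f = f → e * f = f * e

/-- F-inverse monoids in the enriched signature `(·, ⁻¹, ᵐ, 1)`. -/
class FInverseMonoid (S : Type u) extends InverseMonoid S where
  mx : S → S
  mx_isMaxOp : IsMaxOp mx

/-- The max-operation of an F-inverse monoid. -/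
def mx {S : Type u} [FInverseMonoid S] : S → S := FInverseMonoid.mx

section InverseMonoidLemmas

variable {S : Type u} [InverseMonoid S]

lemma mul_inv_idem (a : S) : (a * a⁻¹) * (a * a⁻¹) = a * a⁻¹ := by
  conv_lhs => rw [← mul_assoc, InverseMonoid.mul_inv_self_mul]

lemma inv_mul_self_mul (a : S) : a⁻¹ * a * a⁻¹ = a⁻¹ := by
  have h := InverseMonoid.mul_inv_self_mul (a := a⁻¹)
  rwa [InverseMonoid.inv_inv] at h

lemma inv_mul_idem (a : S) : (a⁻¹ * a) * (a⁻¹ * a) = a⁻¹ * a := by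
  conv_lhs => rw [← mul_assoc, inv_mul_self_mul]

lemma idem_inv {e : S} (he : e * e = e) : e⁻¹ = e := by
  have h1 : e⁻¹ * e⁻¹ = e⁻¹ := by rw [← InverseMonoid.mul_inv_rev, he]
  have hc : e * e⁻¹ = e⁻¹ * e := InverseMonoid.idem_comm e e⁻¹ he h1
  have h2 : e = e * e⁻¹ := by
    calc e = e * e⁻¹ * e := (InverseMonoid.mul_inv_self_mul e).symm
    _ = e * (e⁻¹ * e) := mul_assoc _ _ _
    _ = e * (e * e⁻¹) := by rw [hc]
    _ = e * e * e⁻¹ := (mul_assoc _ _ _).symm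
    _ = e * e⁻¹ := by rw [he]
  have h3 : e⁻¹ = e⁻¹ * e := by
    calc e⁻¹ = e⁻¹ * e * e⁻¹ := (inv_mul_self_mul e).symm
    _ = e⁻¹ * (e * e⁻¹) := mul_assoc _ _ _
    _ = e⁻¹ * (e⁻¹ * e) := by rw [hc]
    _ = e⁻¹ * e⁻¹ * e := (mul_assoc _ _ _).symm
    _ = e⁻¹ * e := by rw [h1]
  rw [h3, ← hc, ← h2]

lemma idem_mul_idem {e f : S} (he : e * e = e) (hf : f * f = f) :
    (e * f) * (e * f) = e * f := by
  calc (e * f) * (e * f) = e * (f * (e * f)) := mul_assoc _ _ _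
  _ = e * (f * e * f) := by rw [← mul_assoc f e f]
  _ = e * (e * f * f) := by rw [← InverseMonoid.idem_comm e f he hf]
  _ = e * (e * (f * f)) := by rw [mul_assoc e f f]
  _ = e * (e * f) := by rw [hf]
  _ = e * e * f := (mul_assoc _ _ _).symm
  _ = e * f := by rw [he]

lemma sigma_refl (a : S) : sigma a a := ⟨1, one_mul 1, rfl⟩

lemma sigma_symm {a b : S} (h : sigma a b) : sigma b a := by
  obtain ⟨e, he, hab⟩ := h
  exact ⟨e, he, hab.symm⟩

lemma sigma_trans {a b c : S} (h₁ : sigma a b) (h₂ : sigma b c) : sigma a c := by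
  obtain ⟨e, he, h1⟩ := h₁
  obtain ⟨f, hf, h2⟩ := h₂
  refine ⟨e * f, idem_mul_idem he hf, ?_⟩
  calc a * (e * f) = a * e * f := (mul_assoc _ _ _).symm
  _ = b * e * f := by rw [h1]
  _ = b * (e * f) := mul_assoc _ _ _
  _ = b * (f * e) := by rw [InverseMonoid.idem_comm e f he hf]
  _ = b * f * e := (mul_assoc _ _ _).symm
  _ = c * f * e := by rw [h2]
  _ = c * (f * e) := mul_assoc _ _ _
  _ = c * (e * f) := by rw [InverseMonoid.idem_comm e f he hf]

lemma sigma_mul_left {a b : S} (c : S) (h : sigma a b) : sigma (c * a) (c * b) := by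
  obtain ⟨e, he, hab⟩ := h
  exact ⟨e, he, by rw [mul_assoc, hab, ← mul_assoc]⟩

lemma inner_lemma {e : S} (he : e * e = e) (a : S) :
    a⁻¹ * (a * e * a⁻¹) = e * a⁻¹ := by
  calc a⁻¹ * (a * e * a⁻¹) = a⁻¹ * (a * e) * a⁻¹ := by rw [← mul_assoc a⁻¹ (a * e) a⁻¹]
  _ = a⁻¹ * a * e * a⁻¹ := by rw [← mul_assoc a⁻¹ a e]
  _ = e * (a⁻¹ * a) * a⁻¹ := by rw [InverseMonoid.idem_comm (a⁻¹ * a) e (inv_mul_idem a) he]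
  _ = e * (a⁻¹ * a * a⁻¹) := by rw [mul_assoc e (a⁻¹ * a) a⁻¹]
  _ = e * a⁻¹ := by rw [inv_mul_self_mul]

lemma sigma_inv {a b : S} (h : sigma a b) : sigma a⁻¹ b⁻¹ := by
  obtain ⟨e, he, hab⟩ := h
  have key5 : e * a⁻¹ = e * b⁻¹ := by
    have h' : (a * e)⁻¹ = (b * e)⁻¹ := by rw [hab]
    rwa [InverseMonoid.mul_inv_rev, InverseMonoid.mul_inv_rev, idem_inv he] at h'
  have key1 : (a * e * a⁻¹) * (a * e * a⁻¹) = a * e * a⁻¹ := by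
    calc (a * e * a⁻¹) * (a * e * a⁻¹) = a * e * (a⁻¹ * (a * e * a⁻¹)) := mul_assoc _ _ _
    _ = a * e * (e * a⁻¹) := by rw [inner_lemma he a]
    _ = a * e * e * a⁻¹ := (mul_assoc _ _ _).symm
    _ = a * (e * e) * a⁻¹ := by rw [mul_assoc a e e]
    _ = a * e * a⁻¹ := by rw [he]
  have key3 : a * e * a⁻¹ = b * e * b⁻¹ := by
    calc a * e * a⁻¹ = a * (e * e) * a⁻¹ := by rw [he]
    _ = a * e * e * a⁻¹ := by rw [← mul_assoc a e e]
    _ = a * e * (e * a⁻¹) := mul_assoc _ _ _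
    _ = a * e * (e * b⁻¹) := by rw [key5]
    _ = b * e * (e * b⁻¹) := by rw [hab]
    _ = b * e * e * b⁻¹ := (mul_assoc _ _ _).symm
    _ = b * (e * e) * b⁻¹ := by rw [mul_assoc b e e]
    _ = b * e * b⁻¹ := by rw [he]
  refine ⟨a * e * a⁻¹, key1, ?_⟩
  rw [inner_lemma he a, key5, key3, inner_lemma he b]

lemma sigma_mul_right {a b : S} (c : S) (h : sigma a b) : sigma (a * c) (b * c) := by
  have h1 := sigma_mul_left c⁻¹ (sigma_inv h)
  have h2 := sigma_inv h1
  rwa [InverseMonoid.mul_inv_rev c⁻¹ a⁻¹, InverseMonoid.mul_inv_rev c⁻¹ b⁻¹,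
    InverseMonoid.inv_inv, InverseMonoid.inv_inv, InverseMonoid.inv_inv] at h2

instance sigmaSetoid (S : Type u) [InverseMonoid S] : Setoid S where
  r := sigma
  iseqv := ⟨sigma_refl, sigma_symm, sigma_trans⟩

/-- The maximum group quotient `S/σ`. -/
def GQuot (S : Type u) [InverseMonoid S] : Type u := Quotient (sigmaSetoid S)

/-- The σ-class of an element, as an element of the maximum group quotient. -/
def σclass {S : Type u} [InverseMonoid S] (a : S) : GQuot S := Quotient.mk (sigmaSetoid S) a

instance (S : Type u) [InverseMonoid S] : Group (GQuot S) where
  mul := Quotient.map₂ (· * ·) (fun _ _ h₁ _ _ h₂ =>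
    sigma_trans (sigma_mul_right _ h₁) (sigma_mul_left _ h₂))
  one := σclass 1
  inv := Quotient.map (·⁻¹) (fun _ _ h => sigma_inv h)
  mul_assoc := by
    intro a b c
    induction a using Quotient.ind
    induction b using Quotient.ind
    induction c using Quotient.ind
    exact congrArg (Quotient.mk _) (mul_assoc _ _ _)
  one_mul := by
    intro a
    induction a using Quotient.ind
    exact congrArg (Quotient.mk _) (one_mul _)
  mul_one := by
    intro a
    induction a using Quotient.ind
    exact congrArg (Quotient.mk _) (mul_one _)
  inv_mul_cancel := by
    intro a
    induction a using Quotient.ind with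
    | _ a =>
      refine Quotient.sound ⟨a⁻¹ * a, inv_mul_idem a, ?_⟩
      rw [one_mul]
      exact inv_mul_idem a

end InverseMonoidLemmas


section Graphs

variable {G : Type u} [Group G] {X : Type v}

/-- A subgraph of the Cayley graph `Cay(G)` of the `X`-generated group `G` (with assignment
mapping `φ : X → G`), represented by its set of vertices and its set of positive edges:
the positive edge `(g, x)` goes from `g` to `g * φ x` and carries the label `x`; every
subgraph closed under edge inversion is uniquely determined by this data. -/
structure Subgraph (φ : X → G) : Type (max u v) where
  verts : Set G
  edges : Set (G × X)
  src_mem : ∀ e ∈ edges, Prod.fst e ∈ verts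
  tgt_mem : ∀ e ∈ edges, e.1 * φ e.2 ∈ verts

namespace Subgraph

variable {φ : X → G}

lemma ext' {Γ Δ : Subgraph φ} (hv : Γ.verts = Δ.verts) (he : Γ.edges = Δ.edges) : Γ = Δ := by
  cases Γ; cases Δ; cases hv; cases he; rfl

/-- Union of subgraphs. -/
def union (Γ Δ : Subgraph φ) : Subgraph φ where
  verts := Γ.verts ∪ Δ.verts
  edges := Γ.edges ∪ Δ.edges
  src_mem := by
    intro e he
    rcases he with h | h
    · exact Set.mem_union_left _ (Γ.src_mem e h)
    · exact Set.mem_union_right _ (Δ.src_mem e h)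
  tgt_mem := by
    intro e he
    rcases he with h | h
    · exact Set.mem_union_left _ (Γ.tgt_mem e h)
    · exact Set.mem_union_right _ (Δ.tgt_mem e h)

instance : Union (Subgraph φ) := ⟨union⟩

@[simp] lemma union_verts (Γ Δ : Subgraph φ) : (Γ ∪ Δ).verts = Γ.verts ∪ Δ.verts := rfl
@[simp] lemma union_edges (Γ Δ : Subgraph φ) : (Γ ∪ Δ).edges = Γ.edges ∪ Δ.edges := rfl

/-- Left translation of a subgraph by a group element. -/
def smul (g : G) (Γ : Subgraph φ) : Subgraph φ where
  verts := (g * ·) '' Γ.verts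
  edges := (fun e => (g * e.1, e.2)) '' Γ.edges
  src_mem := by
    rintro e ⟨e', he', rfl⟩
    exact ⟨e'.1, Γ.src_mem e' he', rfl⟩
  tgt_mem := by
    rintro e ⟨e', he', rfl⟩
    exact ⟨e'.1 * φ e'.2, Γ.tgt_mem e' he', (mul_assoc g e'.1 (φ e'.2)).symm⟩

instance : SMul G (Subgraph φ) := ⟨smul⟩

@[simp] lemma smul_verts (g : G) (Γ : Subgraph φ) : (g • Γ).verts = (g * ·) '' Γ.verts := rfl
@[simp] lemma smul_edges (g : G) (Γ : Subgraph φ) :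
    (g • Γ).edges = (fun e : G × X => (g * e.1, e.2)) '' Γ.edges := rfl

/-- The subgraph relation. -/
instance : HasSubset (Subgraph φ) := ⟨fun Γ Δ => Γ.verts ⊆ Δ.verts ∧ Γ.edges ⊆ Δ.edges⟩

lemma subset_iff (Γ Δ : Subgraph φ) : Γ ⊆ Δ ↔ Γ.verts ⊆ Δ.verts ∧ Γ.edges ⊆ Δ.edges := Iff.rfl

/-- Finiteness of a subgraph. -/
def IsFinite (Γ : Subgraph φ) : Prop := Γ.verts.Finite ∧ Γ.edges.Finite

/-- A subgraph has no isolated vertices if each of its vertices is an endpoint of one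
of its edges. -/
def NoIsolated (Γ : Subgraph φ) : Prop :=
  ∀ v ∈ Γ.verts, ∃ e ∈ Γ.edges, v = e.1 ∨ v = e.1 * φ e.2

/-- `Ed(Γ)`: the subgraph spanned by the edges of `Γ`, i.e. `Γ` with all isolated vertices
removed. -/
def ed (Γ : Subgraph φ) : Subgraph φ where
  verts := {v | ∃ e ∈ Γ.edges, v = e.1 ∨ v = e.1 * φ e.2}
  edges := Γ.edges
  src_mem := fun e he => ⟨e, he, Or.inl rfl⟩
  tgt_mem := fun e he => ⟨e, he, Or.inr rfl⟩

lemma ed_finite {Γ : Subgraph φ} (h : Γ.IsFinite) : Γ.ed.IsFinite := by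
  constructor
  · have hsub : Γ.ed.verts ⊆
        (fun e : G × X => e.1) '' Γ.edges ∪ (fun e : G × X => e.1 * φ e.2) '' Γ.edges := by
      rintro v ⟨e, he, rfl | rfl⟩
      · exact Set.mem_union_left _ ⟨e, he, rfl⟩
      · exact Set.mem_union_right _ ⟨e, he, rfl⟩
    exact ((h.2.image _).union (h.2.image _)).subset hsub
  · exact h.2

lemma ed_noIsolated (Γ : Subgraph φ) : Γ.ed.NoIsolated := fun _ hv => hv

end Subgraph

open Subgraph

variable {φ : X → G}

/-- The subgraph with the single vertex `g` and no edges. -/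
def vertexG (φ : X → G) (g : G) : Subgraph φ :=
  ⟨{g}, ∅, by simp, by simp⟩

/-- `Δ_g`: the edgeless subgraph with vertices `1` and `g`. -/
def deltaG (φ : X → G) (g : G) : Subgraph φ :=
  ⟨{1, g}, ∅, by simp, by simp⟩

/-- The subgraph spanned by a single (positive) edge. -/
def edgeG (φ : X → G) (e : G × X) : Subgraph φ where
  verts := {e.1, e.1 * φ e.2}
  edges := {e}
  src_mem := by
    intro e' he'
    rw [Set.mem_singleton_iff] at he'
    subst he'
    exact Set.mem_insert _ _
  tgt_mem := by
    intro e' he'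
    rw [Set.mem_singleton_iff] at he'
    subst he'
    exact Set.mem_insert_of_mem _ rfl

/-- The empty subgraph. -/
def emptyG (φ : X → G) : Subgraph φ := ⟨∅, ∅, by simp, by simp⟩

lemma edgeG_noIsolated (φ : X → G) (e : G × X) : (edgeG φ e).NoIsolated := by
  intro v hv
  refine ⟨e, Set.mem_singleton e, ?_⟩
  simpa [edgeG] using hv

/-- Two vertices are adjacent in `Γ` if they are connected by an edge of `Γ`. -/
def adj (Γ : Subgraph φ) (u v : G) : Prop :=
  ∃ e ∈ Γ.edges, (u = e.1 ∧ v = e.1 * φ e.2) ∨ (v = e.1 ∧ u = e.1 * φ e.2)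

/-- A subgraph is connected if any two of its vertices are joined by a path running in it. -/
def Connected (Γ : Subgraph φ) : Prop :=
  ∀ u ∈ Γ.verts, ∀ v ∈ Γ.verts, Relation.ReflTransGen (adj Γ) u v

lemma adj_mono {Γ Δ : Subgraph φ} (h : Γ.edges ⊆ Δ.edges) {u v : G} (ha : adj Γ u v) :
    adj Δ u v := by
  obtain ⟨e, he, hc⟩ := ha
  exact ⟨e, h he, hc⟩

lemma Connected.union {Γ Δ : Subgraph φ} (hΓ : Connected Γ) (hΔ : Connected Δ) (w : G)
    (hw₁ : w ∈ Γ.verts) (hw₂ : w ∈ Δ.verts) : Connected (Γ ∪ Δ) := by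
  have hsΓ : Γ.edges ⊆ (Γ ∪ Δ).edges := by
    rw [union_edges]; exact Set.subset_union_left
  have hsΔ : Δ.edges ⊆ (Γ ∪ Δ).edges := by
    rw [union_edges]; exact Set.subset_union_right
  have mΓ : ∀ {p q : G}, Relation.ReflTransGen (adj Γ) p q →
      Relation.ReflTransGen (adj (Γ ∪ Δ)) p q :=
    fun h => Relation.ReflTransGen.mono (fun _ _ h' => adj_mono hsΓ h') _ _ h
  have mΔ : ∀ {p q : G}, Relation.ReflTransGen (adj Δ) p q →
      Relation.ReflTransGen (adj (Γ ∪ Δ)) p q :=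
    fun h => Relation.ReflTransGen.mono (fun _ _ h' => adj_mono hsΔ h') _ _ h
  intro u hu v hv
  rw [union_verts] at hu hv
  rcases hu with hu | hu <;> rcases hv with hv | hv
  · exact mΓ (hΓ u hu v hv)
  · exact (mΓ (hΓ u hu w hw₁)).trans (mΔ (hΔ w hw₂ v hv))
  · exact (mΔ (hΔ u hu w hw₂)).trans (mΓ (hΓ w hw₁ v hv))
  · exact mΔ (hΔ u hu v hv)

lemma Connected.smul {Γ : Subgraph φ} (g : G) (h : Connected Γ) : Connected (g • Γ) := by
  intro u hu v hv
  rw [smul_verts] at hu hv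
  obtain ⟨u', hu', rfl⟩ := hu
  obtain ⟨v', hv', rfl⟩ := hv
  refine Relation.ReflTransGen.lift (fun z => g * z) ?_ _ _ (h u' hu' v' hv')
  rintro p q ⟨e, he, hc⟩
  show adj (g • Γ) (g * p) (g * q)
  refine ⟨(g * e.1, e.2), ?_, ?_⟩
  · rw [smul_edges]; exact ⟨e, he, rfl⟩
  · rcases hc with ⟨rfl, rfl⟩ | ⟨rfl, rfl⟩
    · exact Or.inl ⟨rfl, (mul_assoc _ _ _).symm⟩
    · exact Or.inr ⟨rfl, (mul_assoc _ _ _).symm⟩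

lemma Subgraph.NoIsolated.union {Γ Δ : Subgraph φ} (hΓ : Γ.NoIsolated) (hΔ : Δ.NoIsolated) :
    (Γ ∪ Δ).NoIsolated := by
  intro v hv
  rw [union_verts] at hv
  rcases hv with hv | hv
  · obtain ⟨e, he, hor⟩ := hΓ v hv
    exact ⟨e, by rw [union_edges]; exact Set.mem_union_left _ he, hor⟩
  · obtain ⟨e, he, hor⟩ := hΔ v hv
    exact ⟨e, by rw [union_edges]; exact Set.mem_union_right _ he, hor⟩

lemma Subgraph.NoIsolated.smul {Γ : Subgraph φ} (g : G) (h : Γ.NoIsolated) :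
    (g • Γ).NoIsolated := by
  intro v hv
  rw [smul_verts] at hv
  obtain ⟨u, hu, rfl⟩ := hv
  obtain ⟨e, he, hor⟩ := h u hu
  refine ⟨(g * e.1, e.2), by rw [smul_edges]; exact ⟨e, he, rfl⟩, ?_⟩
  rcases hor with rfl | rfl
  · exact Or.inl rfl
  · exact Or.inr (mul_assoc _ _ _).symm

end Graphs


section Expansions

variable {G : Type u} [Group G] {X : Type v} {φ : X → G}

open Subgraph

/-- `F(G)`: pairs `(Γ, g)` where `Γ` is a finite subgraph of `Cay(G)` having `1` and `g`
among its vertices. -/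
structure FExp (φ : X → G) : Type (max u v) where
  graph : Subgraph φ
  elt : G
  finite : graph.IsFinite
  one_mem : (1 : G) ∈ graph.verts
  elt_mem : elt ∈ graph.verts

namespace FExp

lemma ext' {a b : FExp φ} (hg : a.graph = b.graph) (he : a.elt = b.elt) : a = b := by
  cases a; cases b; cases hg; cases he; rfl

instance : Mul (FExp φ) :=
  ⟨fun a b =>
    { graph := a.graph ∪ a.elt • b.graph
      elt := a.elt * b.elt
      finite := ⟨by
          rw [union_verts, smul_verts]
          exact a.finite.1.union (b.finite.1.image _),
        by
          rw [union_edges, smul_edges]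
          exact a.finite.2.union (b.finite.2.image _)⟩
      one_mem := by
        rw [union_verts]
        exact Set.mem_union_left _ a.one_mem
      elt_mem := by
        rw [union_verts]
        refine Set.mem_union_right _ ?_
        rw [smul_verts]
        exact ⟨b.elt, b.elt_mem, rfl⟩ }⟩

@[simp] lemma mul_graph (a b : FExp φ) : (a * b).graph = a.graph ∪ a.elt • b.graph := rfl
@[simp] lemma mul_elt (a b : FExp φ) : (a * b).elt = a.elt * b.elt := rfl

instance : One (FExp φ) :=
  ⟨{ graph := deltaG φ 1
     elt := 1
     finite := ⟨(Set.finite_singleton (1 : G)).insert 1, Set.finite_empty⟩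
     one_mem := Set.mem_insert 1 _
     elt_mem := Set.mem_insert 1 _ }⟩

@[simp] lemma one_graph : (1 : FExp φ).graph = deltaG φ 1 := rfl
@[simp] lemma one_elt : (1 : FExp φ).elt = 1 := rfl

instance : Inv (FExp φ) :=
  ⟨fun a =>
    { graph := a.elt⁻¹ • a.graph
      elt := a.elt⁻¹
      finite := ⟨by rw [smul_verts]; exact a.finite.1.image _,
        by rw [smul_edges]; exact a.finite.2.image _⟩
      one_mem := by
        rw [smul_verts]
        exact ⟨a.elt, a.elt_mem, inv_mul_cancel a.elt⟩
      elt_mem := by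
        rw [smul_verts]
        exact ⟨1, a.one_mem, mul_one _⟩ }⟩

@[simp] lemma inv_graph (a : FExp φ) : (a⁻¹).graph = a.elt⁻¹ • a.graph := rfl
@[simp] lemma inv_elt (a : FExp φ) : (a⁻¹).elt = a.elt⁻¹ := rfl

end FExp

/-- The element `(Δ_g, g)` of `F(G)`. -/
def maxElt (φ : X → G) (g : G) : FExp φ where
  graph := deltaG φ g
  elt := g
  finite := ⟨(Set.finite_singleton g).insert 1, Set.finite_empty⟩
  one_mem := Set.mem_insert 1 _
  elt_mem := Set.mem_insert_of_mem _ rfl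

/-- The max-operation `(Γ, g) ↦ (Δ_g, g)` on `F(G)`. -/
def mxOp (a : FExp φ) : FExp φ := maxElt φ a.elt

/-- The generator `(Γ_x, x_G)` of `F(G)`. -/
def genElt (φ : X → G) (x : X) : FExp φ where
  graph := edgeG φ (1, x)
  elt := φ x
  finite := ⟨(Set.finite_singleton _).insert _, Set.finite_singleton _⟩
  one_mem := Set.mem_insert 1 _
  elt_mem := by simp [edgeG]

/-- `M(G)`: the Margolis–Meakin expansion; pairs `(Γ, g)` where `Γ` is a finite *connected*
subgraph of `Cay(G)` having `1` and `g` among its vertices. -/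
structure MExp (φ : X → G) : Type (max u v) where
  graph : Subgraph φ
  elt : G
  finite : graph.IsFinite
  connected : Connected graph
  one_mem : (1 : G) ∈ graph.verts
  elt_mem : elt ∈ graph.verts

namespace MExp

instance : Mul (MExp φ) :=
  ⟨fun a b =>
    { graph := a.graph ∪ a.elt • b.graph
      elt := a.elt * b.elt
      finite := ⟨by
          rw [union_verts, smul_verts]
          exact a.finite.1.union (b.finite.1.image _),
        by
          rw [union_edges, smul_edges]
          exact a.finite.2.union (b.finite.2.image _)⟩
      connected := by
        refine Connected.union a.connected (Connected.smul a.elt b.connected) a.elt a.elt_mem ?_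
        rw [smul_verts]
        exact ⟨1, b.one_mem, mul_one _⟩
      one_mem := by
        rw [union_verts]
        exact Set.mem_union_left _ a.one_mem
      elt_mem := by
        rw [union_verts]
        refine Set.mem_union_right _ ?_
        rw [smul_verts]
        exact ⟨b.elt, b.elt_mem, rfl⟩ }⟩

end MExp

/-- `P(G)`: pairs `(Γ, g)` where `Γ` is a finite subgraph of `Cay(G)` without isolated
vertices and `g ∈ G` (a model of the semidirect product of the semilattice of such
subgraphs by `G`). -/
structure PExp (φ : X → G) : Type (max u v) where
  graph : Subgraph φ
  elt : G
  finite : graph.IsFinite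
  noIsolated : graph.NoIsolated

namespace PExp

lemma ext' {a b : PExp φ} (hg : a.graph = b.graph) (he : a.elt = b.elt) : a = b := by
  cases a; cases b; cases hg; cases he; rfl

instance : Mul (PExp φ) :=
  ⟨fun a b =>
    { graph := a.graph ∪ a.elt • b.graph
      elt := a.elt * b.elt
      finite := ⟨by
          rw [union_verts, smul_verts]
          exact a.finite.1.union (b.finite.1.image _),
        by
          rw [union_edges, smul_edges]
          exact a.finite.2.union (b.finite.2.image _)⟩
      noIsolated := a.noIsolated.union (b.noIsolated.smul a.elt) }⟩

@[simp] lemma mul_graph (a b : PExp φ) : (a * b).graph = a.graph ∪ a.elt • b.graph := rfl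
@[simp] lemma mul_elt (a b : PExp φ) : (a * b).elt = a.elt * b.elt := rfl

instance : One (PExp φ) :=
  ⟨{ graph := emptyG φ
     elt := 1
     finite := ⟨Set.finite_empty, Set.finite_empty⟩
     noIsolated := by intro v hv; simp [emptyG] at hv }⟩

@[simp] lemma one_graph : (1 : PExp φ).graph = emptyG φ := rfl
@[simp] lemma one_elt : (1 : PExp φ).elt = 1 := rfl

instance : Inv (PExp φ) :=
  ⟨fun a =>
    { graph := a.elt⁻¹ • a.graph
      elt := a.elt⁻¹
      finite := ⟨by rw [smul_verts]; exact a.finite.1.image _,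
        by rw [smul_edges]; exact a.finite.2.image _⟩
      noIsolated := a.noIsolated.smul _ }⟩

@[simp] lemma inv_graph (a : PExp φ) : (a⁻¹).graph = a.elt⁻¹ • a.graph := rfl
@[simp] lemma inv_elt (a : PExp φ) : (a⁻¹).elt = a.elt⁻¹ := rfl

end PExp

/-- The max-operation `(Γ, g) ↦ (∅, g)` on `P(G)`. -/
def pMax (a : PExp φ) : PExp φ where
  graph := emptyG φ
  elt := a.elt
  finite := ⟨Set.finite_empty, Set.finite_empty⟩
  noIsolated := by intro v hv; simp [emptyG] at hv

/-- The generator `(Γ_x, x_G)` of `P(G)`. -/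
def genEltP (φ : X → G) (x : X) : PExp φ where
  graph := edgeG φ (1, x)
  elt := φ x
  finite := ⟨(Set.finite_singleton _).insert _, Set.finite_singleton _⟩
  noIsolated := edgeG_noIsolated φ (1, x)

/-- The canonical map `F(G) → P(G)`, `(Γ, g) ↦ (Ed(Γ), g)`. -/
def edMap (a : FExp φ) : PExp φ where
  graph := a.graph.ed
  elt := a.elt
  finite := ed_finite a.finite
  noIsolated := a.graph.ed_noIsolated

/-- The relation `θ` on `F(G)`: `(Γ,g) θ (Ξ,h)` iff `g = h` and `Ed(Γ) = Ed(Ξ)`. -/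
def thetaRel (φ : X → G) (a b : FExp φ) : Prop := a.elt = b.elt ∧ a.graph.ed = b.graph.ed

end Expansions

section Terms

variable {X : Type v}

/-- Terms of the term algebra `I^m_X` in their (unique) normal form
`u₀ · m(v₁) · u₁ ⋯ u_{n-1} · m(vₙ) · uₙ` with `uᵢ, vⱼ` words in the free monoid with
involution `I_X` on `X` (represented as lists over `X ⊕ X`, where `inl x` stands for `x`
and `inr x` for `x⁻¹`): the first component is `u₀`, and the second lists the pairs
`(vᵢ, uᵢ)`. -/
abbrev MTerm (X : Type v) := List (X ⊕ X) × List (List (X ⊕ X) × List (X ⊕ X))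

/-- Value of a letter of `X ⊔ X⁻¹`. -/
def letterVal {M : Type w} [Monoid M] [Inv M] (f : X → M) : X ⊕ X → M
  | Sum.inl x => f x
  | Sum.inr x => (f x)⁻¹

/-- Value of a word of `I_X`. -/
def wordVal {M : Type w} [Monoid M] [Inv M] (f : X → M) (u : List (X ⊕ X)) : M :=
  (u.map (letterVal f)).prod

/-- Value `[t]` of a term `t ∈ I^m_X` under the assignment `f` of the generators,
where `mop` is interpreted as the operation `m`. -/
def termVal {M : Type w} [Monoid M] [Inv M] (f : X → M) (mop : M → M) (t : MTerm X) : M :=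
  wordVal f t.1 * (t.2.map (fun p => mop (wordVal f p.1) * wordVal f p.2)).prod

end Terms

section Journeys

variable {G : Type u} [Group G] {X : Type v}

/-- The subgraph of `Cay(G)` spanned by the path starting at `g` with label the given word;
for the empty word it is the single vertex `g`. -/
def pathGraph (φ : X → G) : G → List (X ⊕ X) → Subgraph φ
  | g, [] => vertexG φ g
  | g, Sum.inl x :: u => edgeG φ (g, x) ∪ pathGraph φ (g * φ x) u
  | g, Sum.inr x :: u => edgeG φ (g * (φ x)⁻¹, x) ∪ pathGraph φ (g * (φ x)⁻¹) u

/-- The subgraph of `Cay(G)` spanned by the journey `j_g(w)` induced by the term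
`w = u₀ · m(v₁) · u₁ ⋯ · m(vₙ) · uₙ` starting at `g`: traverse the path labelled `u₀`
from `g`, jump to `g·[u₀v₁]`, traverse the path labelled `u₁`, and so on. -/
def journeyGraph (φ : X → G) : G → List (X ⊕ X) → List (List (X ⊕ X) × List (X ⊕ X)) →
    Subgraph φ
  | g, u, [] => pathGraph φ g u
  | g, u, (v, u') :: rest =>
      pathGraph φ g u ∪ journeyGraph φ (g * wordVal φ u * wordVal φ v) u' rest

end Journeys

section OrderToolkit
variable {S : Type u} [InverseMonoid S]

lemma nle_refl (a : S) : nle a a := ⟨1, one_mul 1, (mul_one a).symm⟩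

lemma nle_trans {a b c : S} (h1 : nle a b) (h2 : nle b c) : nle a c := by
  obtain ⟨e, he, rfl⟩ := h1
  obtain ⟨d, hd, rfl⟩ := h2
  exact ⟨d * e, idem_mul_idem hd he, mul_assoc _ _ _⟩

lemma nle_antisymm {a b : S} (h1 : nle a b) (h2 : nle b a) : a = b := by
  obtain ⟨e, he, hab⟩ := h1
  obtain ⟨d, hd, hba⟩ := h2
  have hbd : b * d = b := by
    conv_lhs => rw [hba, mul_assoc, hd]
    exact hba.symm
  have had : a * d = a := by
    rw [hab, mul_assoc, InverseMonoid.idem_comm e d he hd, ← mul_assoc, hbd]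
  rw [hba, had]

lemma conj_idem {e : S} (he : e * e = e) (a : S) :
    (a * e * a⁻¹) * (a * e * a⁻¹) = a * e * a⁻¹ := by
  calc (a * e * a⁻¹) * (a * e * a⁻¹) = a * e * (a⁻¹ * (a * e * a⁻¹)) := mul_assoc _ _ _
  _ = a * e * (e * a⁻¹) := by rw [inner_lemma he a]
  _ = a * e * e * a⁻¹ := (mul_assoc _ _ _).symm
  _ = a * (e * e) * a⁻¹ := by rw [mul_assoc a e e]
  _ = a * e * a⁻¹ := by rw [he]

lemma conj_idem' {e : S} (he : e * e = e) (a : S) :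
    (a⁻¹ * e * a) * (a⁻¹ * e * a) = a⁻¹ * e * a := by
  have h := conj_idem he a⁻¹
  rwa [InverseMonoid.inv_inv] at h

lemma nle_mul_left {a b : S} (c : S) (h : nle a b) : nle (c * a) (c * b) := by
  obtain ⟨e, he, rfl⟩ := h
  exact ⟨e, he, (mul_assoc _ _ _).symm⟩

lemma nle_mul_right {a b : S} (c : S) (h : nle a b) : nle (a * c) (b * c) := by
  obtain ⟨e, he, rfl⟩ := h
  refine ⟨c⁻¹ * e * c, conj_idem' he c, ?_⟩
  have h1 : c * (c⁻¹ * e * c) = e * c := by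
    calc c * (c⁻¹ * e * c) = c * ((c⁻¹ * e) * c) := by rw [mul_assoc c⁻¹ e c]
    _ = c * (c⁻¹ * e) * c := (mul_assoc _ _ _).symm
    _ = c * c⁻¹ * e * c := by rw [← mul_assoc c c⁻¹ e]
    _ = e * (c * c⁻¹) * c := by
        rw [InverseMonoid.idem_comm (c * c⁻¹) e (mul_inv_idem c) he]
    _ = e * (c * c⁻¹ * c) := mul_assoc _ _ _
    _ = e * c := by rw [InverseMonoid.mul_inv_self_mul]
  calc b * e * c = b * (e * c) := mul_assoc _ _ _
  _ = b * (c * (c⁻¹ * e * c)) := by rw [h1]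
  _ = b * c * (c⁻¹ * e * c) := (mul_assoc _ _ _).symm

lemma nle_mul {a b c d : S} (h1 : nle a b) (h2 : nle c d) : nle (a * c) (b * d) :=
  nle_trans (nle_mul_right c h1) (nle_mul_left b h2)

lemma nle_inv {a b : S} (h : nle a b) : nle a⁻¹ b⁻¹ := by
  obtain ⟨e, he, rfl⟩ := h
  refine ⟨b * e * b⁻¹, conj_idem he b, ?_⟩
  rw [InverseMonoid.mul_inv_rev, idem_inv he]
  exact (inner_lemma he b).symm

lemma nle_mul_idem (a : S) {e : S} (he : e * e = e) : nle (a * e) a := ⟨e, he, rfl⟩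

lemma nle_mul_inv_mul {a b : S} (h : nle a b) : a * b⁻¹ * b = a := by
  obtain ⟨e, he, rfl⟩ := h
  calc b * e * b⁻¹ * b = b * (e * (b⁻¹ * b)) := by rw [mul_assoc, mul_assoc]
  _ = b * ((b⁻¹ * b) * e) := by
      rw [InverseMonoid.idem_comm e (b⁻¹ * b) he (inv_mul_idem b)]
  _ = b * (b⁻¹ * b) * e := (mul_assoc _ _ _).symm
  _ = b * b⁻¹ * b * e := by rw [mul_assoc b b⁻¹ b]
  _ = b * e := by rw [InverseMonoid.mul_inv_self_mul]

lemma idem_of_nle {a b : S} (h : nle a b) : (a * b⁻¹) * (a * b⁻¹) = a * b⁻¹ := by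
  obtain ⟨e, he, rfl⟩ := h
  exact conj_idem he b

lemma mul_eq_of_mul_pg {x y m : S} (h : x * (m * m⁻¹) = y * (m * m⁻¹)) :
    x * m = y * m := by
  have hx : x * m = x * (m * m⁻¹) * m := by
    rw [mul_assoc x (m * m⁻¹) m, mul_assoc m m⁻¹ m, ← mul_assoc m m⁻¹ m,
      InverseMonoid.mul_inv_self_mul]
  have hy : y * m = y * (m * m⁻¹) * m := by
    rw [mul_assoc y (m * m⁻¹) m, mul_assoc m m⁻¹ m, ← mul_assoc m m⁻¹ m,
      InverseMonoid.mul_inv_self_mul]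
  rw [hx, hy, h]

lemma idem_shift {e : S} (he : e * e = e) (m : S) : m * e = (m * e * m⁻¹) * m := by
  calc m * e = m * m⁻¹ * m * e := by rw [InverseMonoid.mul_inv_self_mul]
  _ = m * (m⁻¹ * m) * e := by rw [mul_assoc m m⁻¹ m]
  _ = m * ((m⁻¹ * m) * e) := mul_assoc _ _ _
  _ = m * (e * (m⁻¹ * m)) := by
      rw [InverseMonoid.idem_comm (m⁻¹ * m) e (inv_mul_idem m) he]
  _ = m * (e * m⁻¹ * m) := by rw [mul_assoc e m⁻¹ m]
  _ = m * (e * m⁻¹) * m := (mul_assoc _ _ _).symm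
  _ = m * e * m⁻¹ * m := by rw [← mul_assoc m e m⁻¹]

lemma sandwich {c m : S} (h : nle c m) : m * m⁻¹ * (c * m⁻¹) * m = c := by
  obtain ⟨e, he, rfl⟩ := h
  have h1 : m * m⁻¹ * (m * e * m⁻¹) = m * e * m⁻¹ := by
    calc m * m⁻¹ * (m * e * m⁻¹) = m * m⁻¹ * (m * (e * m⁻¹)) := by rw [mul_assoc m e m⁻¹]
    _ = m * m⁻¹ * m * (e * m⁻¹) := (mul_assoc _ _ _).symm
    _ = m * (e * m⁻¹) := by rw [InverseMonoid.mul_inv_self_mul]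
    _ = m * e * m⁻¹ := (mul_assoc _ _ _).symm
  have h2 : m * e * m⁻¹ * m = m * e := (idem_shift he m).symm
  calc m * m⁻¹ * (m * e * m⁻¹) * m = m * e * m⁻¹ * m := by rw [h1]
  _ = m * e := h2

end OrderToolkit


section IdemMonoid
variable {S : Type u} [InverseMonoid S]

/-- The commutative monoid of idempotents of an inverse monoid. -/
def Idem (S : Type u) [InverseMonoid S] : Type u := {e : S // e * e = e}

namespace Idem

instance : CommMonoid (Idem S) where
  mul a b := ⟨a.1 * b.1, idem_mul_idem a.2 b.2⟩
  one := ⟨1, one_mul 1⟩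
  mul_assoc a b c := Subtype.ext (mul_assoc a.1 b.1 c.1)
  one_mul a := Subtype.ext (one_mul a.1)
  mul_one a := Subtype.ext (mul_one a.1)
  mul_comm a b := Subtype.ext (InverseMonoid.idem_comm a.1 b.1 a.2 b.2)

@[simp] lemma mul_val (a b : Idem S) : (a * b).1 = a.1 * b.1 := rfl
@[simp] lemma one_val : ((1 : Idem S)).1 = 1 := rfl

lemma sq (a : Idem S) : a * a = a := Subtype.ext a.2

/-- The semilattice order on idempotents. -/
def ile (a b : Idem S) : Prop := a * b = a

lemma ile_iff_nle {a b : Idem S} : ile a b ↔ nle a.1 b.1 := by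
  constructor
  · intro h
    refine ⟨a.1, a.2, ?_⟩
    have h' : a.1 * b.1 = a.1 := congrArg Subtype.val h
    rw [InverseMonoid.idem_comm a.1 b.1 a.2 b.2] at h'
    exact h'.symm
  · rintro ⟨e, he, hab⟩
    refine Subtype.ext ?_
    show a.1 * b.1 = a.1
    rw [hab, mul_assoc, InverseMonoid.idem_comm e b.1 he b.2, ← mul_assoc, b.2, ← hab]

lemma ile_refl (a : Idem S) : ile a a := sq a

lemma ile_trans {a b c : Idem S} (h1 : ile a b) (h2 : ile b c) : ile a c := by
  show a * c = a
  calc a * c = (a * b) * c := by rw [h1]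
  _ = a * (b * c) := mul_assoc _ _ _
  _ = a * b := by rw [h2]
  _ = a := h1

lemma ile_antisymm {a b : Idem S} (h1 : ile a b) (h2 : ile b a) : a = b := by
  show a = b
  calc a = a * b := h1.symm
  _ = b * a := mul_comm _ _
  _ = b := h2

lemma ile_mul_of {t a b : Idem S} (h1 : ile t a) (h2 : ile t b) : ile t (a * b) := by
  show t * (a * b) = t
  rw [← mul_assoc, h1, h2]

lemma ile_mul_left (a b : Idem S) : ile (a * b) a := by
  show (a * b) * a = a * b
  calc (a * b) * a = a * (b * a) := mul_assoc _ _ _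
  _ = a * (a * b) := by rw [mul_comm b a]
  _ = (a * a) * b := (mul_assoc _ _ _).symm
  _ = a * b := by rw [sq]

lemma ile_mul_right (a b : Idem S) : ile (a * b) b := by
  rw [mul_comm]; exact ile_mul_left b a

lemma ile_mul_compat {a b : Idem S} (c : Idem S) (h : ile a b) : ile (a * c) (b * c) := by
  show (a * c) * (b * c) = a * c
  calc (a * c) * (b * c) = (a * b) * (c * c) := mul_mul_mul_comm a c b c
  _ = a * c := by rw [h, sq]

lemma ile_prod {α : Type*} {s : Finset α} {F : α → Idem S} {t : Idem S}
    (h : ∀ i ∈ s, ile t (F i)) : ile t (s.prod F) := by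
  classical
  induction s using Finset.induction_on with
  | empty => exact mul_one t
  | insert a s' ha ih =>
    rw [Finset.prod_insert ha]
    exact ile_mul_of (h a (Finset.mem_insert_self a s'))
      (ih fun i hi => h i (Finset.mem_insert_of_mem hi))

lemma prod_ile {α : Type*} {s : Finset α} (F : α → Idem S) {i : α} (hi : i ∈ s) :
    ile (s.prod F) (F i) := by
  classical
  show s.prod F * F i = s.prod F
  conv_lhs => rw [← Finset.mul_prod_erase s F hi]
  rw [mul_assoc, mul_comm ((s.erase i).prod F) (F i), ← mul_assoc, sq,
    Finset.mul_prod_erase s F hi]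

lemma prod_union_idem {α : Type*} [DecidableEq α] (s t : Finset α) (F : α → Idem S) :
    (s ∪ t).prod F = s.prod F * t.prod F := by
  have h1 := Finset.prod_union_inter (s₁ := s) (s₂ := t) (f := F)
  have h2 : ile ((s ∪ t).prod F) ((s ∩ t).prod F) :=
    ile_prod fun i hi =>
      prod_ile F (Finset.mem_union_left _ (Finset.mem_of_mem_inter_left hi))
  rw [← h1]
  exact h2.symm

lemma prod_pair_idem {α : Type*} [DecidableEq α] (a b : α) (F : α → Idem S) :
    (insert a {b} : Finset α).prod F = F a * F b := by
  by_cases h : a = b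
  · subst h
    rw [Finset.insert_eq_self.mpr (Finset.mem_singleton_self a), Finset.prod_singleton, sq]
  · rw [Finset.prod_pair h]

end Idem

end IdemMonoid


section MaxMachinery
variable {F : Type w} [FInverseMonoid F]

lemma mx_sigma (a : F) : sigma (mx a) a := (FInverseMonoid.mx_isMaxOp a).1

lemma nle_mx {a b : F} (h : sigma b a) : nle b (mx a) := (FInverseMonoid.mx_isMaxOp a).2 b h

lemma mx_eq_of_sigma {a b : F} (h : sigma a b) : mx a = mx b :=
  nle_antisymm (nle_mx (sigma_trans (mx_sigma a) h))
    (nle_mx (sigma_trans (mx_sigma b) (sigma_symm h)))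

/-- The maximum element of a σ-class. -/
def MQ : GQuot F → F := Quotient.lift mx fun _ _ h => mx_eq_of_sigma h

lemma MQ_mk (a : F) : MQ (σclass a) = mx a := rfl

lemma σclass_MQ (q : GQuot F) : σclass (MQ q) = q := by
  obtain ⟨a, rfl⟩ := Quotient.exists_rep q
  exact Quotient.sound (mx_sigma a)

lemma σclass_mul (a b : F) : σclass (a * b) = σclass a * σclass b := rfl

lemma σclass_inv (a : F) : σclass a⁻¹ = (σclass a)⁻¹ := rfl

lemma σclass_one : σclass (1 : F) = 1 := rfl

lemma nle_MQ {a : F} {q : GQuot F} (h : σclass a = q) : nle a (MQ q) := by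
  obtain ⟨b, rfl⟩ := Quotient.exists_rep q
  exact nle_mx (Quotient.exact h)

lemma mx_mx (a : F) : mx (mx a) = mx a := mx_eq_of_sigma (mx_sigma a)

lemma mx_MQ (q : GQuot F) : mx (MQ q) = MQ q := by
  obtain ⟨a, rfl⟩ := Quotient.exists_rep q
  exact mx_mx a

lemma mx_one : mx (1 : F) = 1 := by
  have h1 : nle (1 : F) (mx 1) := nle_mx (sigma_refl 1)
  have h3 : nle (mx (1 : F) * mx 1) (mx 1) := by
    refine nle_mx ?_
    have hs : sigma (mx (1 : F) * mx 1) (mx 1 * 1) := sigma_mul_left _ (mx_sigma 1)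
    rw [mul_one] at hs
    exact sigma_trans hs (mx_sigma 1)
  have h4 : nle (mx (1 : F)) (mx 1 * mx 1) := by
    obtain ⟨e, he, h1e⟩ := h1
    exact ⟨e, he, by rw [mul_assoc, ← h1e, mul_one]⟩
  have h2 : mx (1 : F) * mx 1 = mx 1 := nle_antisymm h3 h4
  have h5 : nle (mx (1 : F)) 1 := ⟨mx 1, h2, (one_mul _).symm⟩
  exact nle_antisymm h5 h1

variable {G : Type u} [Group G]

/-- The maximum element associated to a group element via `ν`. -/
def Mg (ν : G →* GQuot F) (g : G) : F := MQ (ν g)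

lemma σclass_Mg (ν : G →* GQuot F) (g : G) : σclass (Mg ν g) = ν g := σclass_MQ (ν g)

lemma Mg_one (ν : G →* GQuot F) : Mg ν 1 = 1 := by
  show MQ (ν 1) = 1
  rw [map_one]
  exact mx_one

lemma Mg_mul_nle (ν : G →* GQuot F) (g h : G) : nle (Mg ν g * Mg ν h) (Mg ν (g * h)) := by
  refine nle_MQ ?_
  rw [σclass_mul, σclass_Mg, σclass_Mg, ← map_mul]

lemma Mg_inv (ν : G →* GQuot F) (g : G) : Mg ν g⁻¹ = (Mg ν g)⁻¹ := by
  have key : ∀ k : G, nle ((Mg ν k)⁻¹) (Mg ν k⁻¹) := by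
    intro k
    refine nle_MQ ?_
    rw [σclass_inv, σclass_Mg, ← map_inv]
  refine nle_antisymm ?_ (key g)
  have h := key g⁻¹
  rw [inv_inv] at h
  have h2 := nle_inv h
  rwa [InverseMonoid.inv_inv] at h2

end MaxMachinery


section ConjToolkit
variable {S : Type u} [InverseMonoid S]

lemma conj_mul (a e f : S) (hf : f * f = f) :
    (a * e * a⁻¹) * (a * f * a⁻¹) = a * (e * f) * a⁻¹ := by
  calc (a * e * a⁻¹) * (a * f * a⁻¹)
      = a * e * (a⁻¹ * (a * f * a⁻¹)) := mul_assoc _ _ _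
  _ = a * e * (f * a⁻¹) := by rw [inner_lemma hf a]
  _ = a * e * f * a⁻¹ := by rw [← mul_assoc]
  _ = a * (e * f) * a⁻¹ := by rw [mul_assoc a e f]

lemma idem_sandwich {x y : S} (hx : x * x = x) (hy : y * y = y) : x * y * x = x * y := by
  rw [mul_assoc, InverseMonoid.idem_comm y x hy hx, ← mul_assoc, hx]

end ConjToolkit

section PQC
variable {G : Type u} [Group G] {X : Type v} {F : Type w} [FInverseMonoid F]

/-- The vertex idempotent `M(v)·M(v)⁻¹`. -/
def Pv (ν : G →* GQuot F) (v : G) : Idem F := ⟨Mg ν v * (Mg ν v)⁻¹, mul_inv_idem _⟩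

lemma Pv_one (ν : G →* GQuot F) : Pv ν 1 = 1 := by
  refine Subtype.ext ?_
  show Mg ν 1 * (Mg ν 1)⁻¹ = 1
  rw [Mg_one, idem_inv (one_mul 1), one_mul]

lemma Qe_nle (ν : G →* GQuot F) (f : X → F) (φ : X → G)
    (hν : ∀ x : X, ν (φ x) = σclass (f x)) (e : G × X) :
    nle (Mg ν e.1 * f e.2) (Mg ν (e.1 * φ e.2)) :=
  nle_MQ (by rw [σclass_mul, σclass_Mg, ← hν, ← map_mul])

/-- The edge idempotent `M(u)·x_F·M(u·x_G)⁻¹`. -/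
def Qe (ν : G →* GQuot F) (f : X → F) (φ : X → G)
    (hν : ∀ x : X, ν (φ x) = σclass (f x)) (e : G × X) : Idem F :=
  ⟨Mg ν e.1 * f e.2 * (Mg ν (e.1 * φ e.2))⁻¹, idem_of_nle (Qe_nle ν f φ hν e)⟩

/-- Conjugation of an idempotent by `M(g)`. -/
def Cj (ν : G →* GQuot F) (g : G) (e : Idem F) : Idem F :=
  ⟨Mg ν g * e.1 * (Mg ν g)⁻¹, conj_idem e.2 _⟩

lemma Cj_mul (ν : G →* GQuot F) (g : G) (e e' : Idem F) :
    Cj ν g (e * e') = Cj ν g e * Cj ν g e' :=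
  Subtype.ext (conj_mul (Mg ν g) e.1 e'.1 e'.2).symm

lemma Cj_one (ν : G →* GQuot F) (g : G) : Cj ν g 1 = Pv ν g := by
  refine Subtype.ext ?_
  show Mg ν g * 1 * (Mg ν g)⁻¹ = Mg ν g * (Mg ν g)⁻¹
  rw [mul_one]

lemma Cj_mono (ν : G →* GQuot F) (g : G) {e e' : Idem F} (h : Idem.ile e e') :
    Idem.ile (Cj ν g e) (Cj ν g e') := by
  rw [Idem.ile_iff_nle] at h ⊢
  exact nle_mul_right _ (nle_mul_left _ h)

lemma ile_Cj_Pv (ν : G →* GQuot F) (g : G) (e : Idem F) :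
    Idem.ile (Cj ν g e) (Pv ν g) := by
  refine Subtype.ext ?_
  show Mg ν g * e.1 * (Mg ν g)⁻¹ * (Mg ν g * (Mg ν g)⁻¹) = Mg ν g * e.1 * (Mg ν g)⁻¹
  rw [mul_assoc (Mg ν g * e.1) (Mg ν g)⁻¹, ← mul_assoc (Mg ν g)⁻¹ (Mg ν g) (Mg ν g)⁻¹,
    inv_mul_self_mul]

lemma Cj_prod (ν : G →* GQuot F) (g : G) {α : Type*} (s : Finset α) (Fn : α → Idem F) :
    Cj ν g (s.prod Fn) = Pv ν g * s.prod (fun i => Cj ν g (Fn i)) := by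
  classical
  induction s using Finset.induction_on with
  | empty =>
    rw [Finset.prod_empty, Finset.prod_empty, mul_one]
    exact Cj_one ν g
  | insert a s' ha ih =>
    rw [Finset.prod_insert ha, Finset.prod_insert ha, Cj_mul, ih,
      mul_left_comm (Cj ν g (Fn a))]

lemma K1 (ν : G →* GQuot F) (g v : G) :
    Idem.ile (Cj ν g (Pv ν v)) (Pv ν (g * v)) := by
  rw [Idem.ile_iff_nle]
  show nle (Mg ν g * (Mg ν v * (Mg ν v)⁻¹) * (Mg ν g)⁻¹)
    (Mg ν (g * v) * (Mg ν (g * v))⁻¹)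
  have h1 : Mg ν g * (Mg ν v * (Mg ν v)⁻¹) * (Mg ν g)⁻¹
      = (Mg ν g * Mg ν v) * (Mg ν g * Mg ν v)⁻¹ := by
    rw [InverseMonoid.mul_inv_rev]
    simp only [mul_assoc]
  rw [h1]
  exact nle_mul (Mg_mul_nle ν g v) (nle_inv (Mg_mul_nle ν g v))

lemma K2 (ν : G →* GQuot F) (f : X → F) (φ : X → G)
    (hν : ∀ x : X, ν (φ x) = σclass (f x)) (g u : G) (x : X) :
    Idem.ile (Cj ν g (Qe ν f φ hν (u, x))) (Qe ν f φ hν (g * u, x)) := by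
  rw [Idem.ile_iff_nle]
  show nle (Mg ν g * (Mg ν u * f x * (Mg ν (u * φ x))⁻¹) * (Mg ν g)⁻¹)
    (Mg ν (g * u) * f x * (Mg ν ((g * u) * φ x))⁻¹)
  have h1 : Mg ν g * (Mg ν u * f x * (Mg ν (u * φ x))⁻¹) * (Mg ν g)⁻¹
      = ((Mg ν g * Mg ν u) * f x) * ((Mg ν g * Mg ν (u * φ x))⁻¹) := by
    rw [InverseMonoid.mul_inv_rev]
    simp only [mul_assoc]
  rw [h1]
  have h2 : nle (Mg ν g * Mg ν (u * φ x)) (Mg ν ((g * u) * φ x)) := by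
    have h := Mg_mul_nle ν g (u * φ x)
    have harg : g * (u * φ x) = (g * u) * φ x := by group
    rwa [harg] at h
  exact nle_mul (nle_mul (Mg_mul_nle ν g u) (nle_refl (f x))) (nle_inv h2)

lemma PP_eq (ν : G →* GQuot F) (g k : G) :
    (Pv ν g * Pv ν k).1
      = Mg ν g * ((Mg ν g)⁻¹ * Mg ν k * ((Mg ν g)⁻¹ * Mg ν k)⁻¹) * (Mg ν g)⁻¹ := by
  have hc : ((Mg ν g)⁻¹ * Mg ν k)⁻¹ = (Mg ν k)⁻¹ * Mg ν g := by
    rw [InverseMonoid.mul_inv_rev, InverseMonoid.inv_inv]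
  rw [hc]
  have e1 : Mg ν g * ((Mg ν g)⁻¹ * Mg ν k * ((Mg ν k)⁻¹ * Mg ν g)) * (Mg ν g)⁻¹
      = (Mg ν g * (Mg ν g)⁻¹) * (Mg ν k * (Mg ν k)⁻¹) * (Mg ν g * (Mg ν g)⁻¹) := by
    simp only [mul_assoc]
  rw [e1, idem_sandwich (mul_inv_idem _) (mul_inv_idem _)]
  rfl

lemma nle_inv_Mg (ν : G →* GQuot F) (g k : G) (w : G) (harg : g⁻¹ * k = w) :
    nle ((Mg ν g)⁻¹ * Mg ν k) (Mg ν w) := by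
  have h := Mg_mul_nle ν g⁻¹ k
  rwa [harg, Mg_inv] at h

lemma K3 (ν : G →* GQuot F) (g w : G) :
    Idem.ile (Pv ν g * Pv ν (g * w)) (Cj ν g (Pv ν w)) := by
  rw [Idem.ile_iff_nle]
  rw [PP_eq ν g (g * w)]
  have hc : nle ((Mg ν g)⁻¹ * Mg ν (g * w)) (Mg ν w) :=
    nle_inv_Mg ν g (g * w) w (by group)
  exact nle_mul_right _ (nle_mul_left _ (nle_mul hc (nle_inv hc)))

lemma K4 (ν : G →* GQuot F) (f : X → F) (φ : X → G)
    (hν : ∀ x : X, ν (φ x) = σclass (f x)) (g u : G) (x : X) :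
    Idem.ile (Pv ν g * Qe ν f φ hν (g * u, x)) (Cj ν g (Qe ν f φ hν (u, x))) := by
  rw [Idem.ile_iff_nle]
  have hc : ((Mg ν g)⁻¹ * Mg ν ((g * u) * φ x))⁻¹
      = (Mg ν ((g * u) * φ x))⁻¹ * Mg ν g := by
    rw [InverseMonoid.mul_inv_rev, InverseMonoid.inv_inv]
  have e1 : Mg ν g * (((Mg ν g)⁻¹ * Mg ν (g * u)) * f x
        * (((Mg ν g)⁻¹ * Mg ν ((g * u) * φ x))⁻¹)) * (Mg ν g)⁻¹
      = (Mg ν g * (Mg ν g)⁻¹) * (Mg ν (g * u) * f x * (Mg ν ((g * u) * φ x))⁻¹)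
        * (Mg ν g * (Mg ν g)⁻¹) := by
    rw [hc]
    simp only [mul_assoc]
  have e2 : (Pv ν g * Qe ν f φ hν (g * u, x)).1
      = Mg ν g * (((Mg ν g)⁻¹ * Mg ν (g * u)) * f x
        * (((Mg ν g)⁻¹ * Mg ν ((g * u) * φ x))⁻¹)) * (Mg ν g)⁻¹ := by
    have hy : (Mg ν (g * u) * f x * (Mg ν ((g * u) * φ x))⁻¹)
        * (Mg ν (g * u) * f x * (Mg ν ((g * u) * φ x))⁻¹)
        = Mg ν (g * u) * f x * (Mg ν ((g * u) * φ x))⁻¹ := (Qe ν f φ hν (g * u, x)).2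
    rw [e1, idem_sandwich (mul_inv_idem _) hy]
    rfl
  rw [e2]
  have h1 : nle ((Mg ν g)⁻¹ * Mg ν (g * u)) (Mg ν u) :=
    nle_inv_Mg ν g (g * u) u (by group)
  have h2 : nle ((Mg ν g)⁻¹ * Mg ν ((g * u) * φ x)) (Mg ν (u * φ x)) :=
    nle_inv_Mg ν g ((g * u) * φ x) (u * φ x) (by group)
  exact nle_mul_right _ (nle_mul_left _
    (nle_mul (nle_mul h1 (nle_refl (f x))) (nle_inv h2)))

/-- The idempotent `M(g)·M(g')·M(gg')⁻¹`. -/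
def eps (ν : G →* GQuot F) (g g' : G) : Idem F :=
  ⟨Mg ν g * Mg ν g' * (Mg ν (g * g'))⁻¹, idem_of_nle (Mg_mul_nle ν g g')⟩

lemma eps_mul_Mg (ν : G →* GQuot F) (g g' : G) :
    (eps ν g g').1 * Mg ν (g * g') = Mg ν g * Mg ν g' :=
  nle_mul_inv_mul (Mg_mul_nle ν g g')

lemma K5 (ν : G →* GQuot F) (g g' : G) :
    Idem.ile (Pv ν g * Pv ν (g * g')) (eps ν g g') := by
  rw [Idem.ile_iff_nle]
  rw [PP_eq ν g (g * g')]
  have e3 : Mg ν g * ((Mg ν g)⁻¹ * Mg ν (g * g') * ((Mg ν g)⁻¹ * Mg ν (g * g'))⁻¹)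
        * (Mg ν g)⁻¹
      = (Mg ν g * ((Mg ν g)⁻¹ * Mg ν (g * g')))
        * (((Mg ν g)⁻¹ * Mg ν (g * g'))⁻¹ * (Mg ν g)⁻¹) := by
    simp only [mul_assoc]
  rw [e3]
  have hc : nle ((Mg ν g)⁻¹ * Mg ν (g * g')) (Mg ν g') :=
    nle_inv_Mg ν g (g * g') g' (by group)
  have hb : nle (((Mg ν g)⁻¹ * Mg ν (g * g'))⁻¹ * (Mg ν g)⁻¹) ((Mg ν (g * g'))⁻¹) := by
    have hc2 : ((Mg ν g)⁻¹ * Mg ν (g * g'))⁻¹ * (Mg ν g)⁻¹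
        = (Mg ν (g * g'))⁻¹ * (Mg ν g * (Mg ν g)⁻¹) := by
      rw [InverseMonoid.mul_inv_rev, InverseMonoid.inv_inv]
      simp only [mul_assoc]
    rw [hc2]
    exact nle_mul_idem _ (mul_inv_idem _)
  exact nle_mul (nle_mul_left _ hc) hb

end PQC


section TranslCore
variable {G : Type u} [Group G] {X : Type v} {F : Type w} [FInverseMonoid F]
open Idem

lemma Cj_exp (ν : G →* GQuot F) (f : X → F) (φ : X → G)
    (hν : ∀ x : X, ν (φ x) = σclass (f x)) (g : G) (sV : Finset G) (sE : Finset (G × X)) :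
    Cj ν g (sV.prod (Pv ν) * sE.prod (Qe ν f φ hν))
      = Pv ν g * (sV.prod (fun v => Cj ν g (Pv ν v))
        * sE.prod (fun e => Cj ν g (Qe ν f φ hν e))) := by
  rw [Cj_mul, Cj_prod, Cj_prod, mul_mul_mul_comm, Idem.sq]

lemma transl_eq (ν : G →* GQuot F) (f : X → F) (φ : X → G)
    (hν : ∀ x : X, ν (φ x) = σclass (f x)) (t : G) (sV : Finset G) (sE : Finset (G × X)) :
    (sV.prod (fun v => Pv ν (t * v)) * sE.prod (fun e => Qe ν f φ hν (t * e.1, e.2)))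
        * Pv ν t
      = Cj ν t (sV.prod (Pv ν) * sE.prod (Qe ν f φ hν)) * Pv ν t := by
  set A := sV.prod (fun v => Pv ν (t * v)) with hA
  set B := sE.prod (fun e => Qe ν f φ hν (t * e.1, e.2)) with hB
  set E := sV.prod (Pv ν) * sE.prod (Qe ν f φ hν) with hE
  have hLP : ile (A * B * Pv ν t) (Pv ν t) := ile_mul_right _ _
  have hRP : ile (Cj ν t E * Pv ν t) (Pv ν t) := ile_mul_right _ _
  have hLA : ile (A * B * Pv ν t) A := ile_trans (ile_mul_left _ _) (ile_mul_left _ _)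
  have hLB : ile (A * B * Pv ν t) B := ile_trans (ile_mul_left _ _) (ile_mul_right _ _)
  have hRC : ile (Cj ν t E * Pv ν t) (Cj ν t E) := ile_mul_left _ _
  refine ile_antisymm ?_ ?_
  · -- L ≤ R
    refine ile_mul_of ?_ hLP
    rw [hE, Cj_exp]
    refine ile_mul_of hLP (ile_mul_of (ile_prod ?_) (ile_prod ?_))
    · intro v hv
      exact ile_trans
        (ile_mul_of hLP (ile_trans hLA (prod_ile _ hv))) (K3 ν t v)
    · intro e he
      have h4 := K4 ν f φ hν t e.1 e.2
      rw [Prod.mk.eta] at h4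
      exact ile_trans (ile_mul_of hLP (ile_trans hLB (prod_ile _ he))) h4
  · -- R ≤ L
    refine ile_mul_of (ile_mul_of (ile_prod ?_) (ile_prod ?_)) hRP
    · intro v hv
      refine ile_trans hRC (ile_trans
        (Cj_mono ν t (ile_trans (ile_mul_left _ _) (prod_ile _ hv))) (K1 ν t v))
    · intro e he
      have h2 := K2 ν f φ hν t e.1 e.2
      rw [Prod.mk.eta] at h2
      exact ile_trans hRC (ile_trans
        (Cj_mono ν t (ile_trans (ile_mul_right _ _) (prod_ile _ he))) h2)

end TranslCore


section EfunSec
variable {G : Type u} [Group G] {X : Type v} {F : Type w} [FInverseMonoid F]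
open Idem

/-- The idempotent associated to the graph of an element of `F(G)`. -/
noncomputable def Efun (ν : G →* GQuot F) (f : X → F) (φ : X → G)
    (hν : ∀ x : X, ν (φ x) = σclass (f x)) (a : FExp φ) : Idem F :=
  a.finite.1.toFinset.prod (Pv ν) * a.finite.2.toFinset.prod (Qe ν f φ hν)

/-- The canonical morphism `F(G) → F`. -/
noncomputable def hmap (ν : G →* GQuot F) (f : X → F) (φ : X → G)
    (hν : ∀ x : X, ν (φ x) = σclass (f x)) (a : FExp φ) : F :=
  (Efun ν f φ hν a).1 * Mg ν a.elt

variable (ν : G →* GQuot F) (f : X → F) (φ : X → G)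
  (hν : ∀ x : X, ν (φ x) = σclass (f x))

lemma Efun_mul (a b : FExp φ) :
    Efun ν f φ hν (a * b)
      = Efun ν f φ hν a
        * (b.finite.1.toFinset.prod (fun v => Pv ν (a.elt * v))
          * b.finite.2.toFinset.prod (fun e => Qe ν f φ hν (a.elt * e.1, e.2))) := by
  classical
  have hv : (a * b).finite.1.toFinset
      = a.finite.1.toFinset ∪ b.finite.1.toFinset.image (fun v => a.elt * v) := by
    ext y
    simp [Set.Finite.mem_toFinset, FExp.mul_graph, Subgraph.union_verts, Subgraph.smul_verts]
  have he : (a * b).finite.2.toFinset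
      = a.finite.2.toFinset ∪ b.finite.2.toFinset.image (fun e => (a.elt * e.1, e.2)) := by
    ext y
    simp [Set.Finite.mem_toFinset, FExp.mul_graph, Subgraph.union_edges, Subgraph.smul_edges]
  have hinj1 : ∀ x ∈ b.finite.1.toFinset, ∀ y ∈ b.finite.1.toFinset,
      a.elt * x = a.elt * y → x = y := fun x _ y _ h => mul_left_cancel h
  have hinj2 : ∀ p ∈ b.finite.2.toFinset, ∀ q ∈ b.finite.2.toFinset,
      (a.elt * p.1, p.2) = (a.elt * q.1, q.2) → p = q := by
    intro p _ q _ h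
    have h1 := congrArg Prod.fst h
    have h2 := congrArg Prod.snd h
    exact Prod.ext_iff.mpr ⟨mul_left_cancel h1, h2⟩
  show (a * b).finite.1.toFinset.prod (Pv ν) * (a * b).finite.2.toFinset.prod (Qe ν f φ hν) = _
  rw [hv, he, prod_union_idem, prod_union_idem, Finset.prod_image hinj1,
    Finset.prod_image hinj2, mul_mul_mul_comm]
  rfl

lemma Efun_inv (a : FExp φ) :
    Efun ν f φ hν a⁻¹
      = a.finite.1.toFinset.prod (fun v => Pv ν (a.elt⁻¹ * v))
        * a.finite.2.toFinset.prod (fun e => Qe ν f φ hν (a.elt⁻¹ * e.1, e.2)) := by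
  classical
  have hv : (a⁻¹).finite.1.toFinset
      = a.finite.1.toFinset.image (fun v => a.elt⁻¹ * v) := by
    ext y
    simp [Set.Finite.mem_toFinset, FExp.inv_graph, Subgraph.smul_verts]
  have he : (a⁻¹).finite.2.toFinset
      = a.finite.2.toFinset.image (fun e => (a.elt⁻¹ * e.1, e.2)) := by
    ext y
    simp [Set.Finite.mem_toFinset, FExp.inv_graph, Subgraph.smul_edges]
  have hinj1 : ∀ x ∈ a.finite.1.toFinset, ∀ y ∈ a.finite.1.toFinset,
      a.elt⁻¹ * x = a.elt⁻¹ * y → x = y := fun x _ y _ h => mul_left_cancel h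
  have hinj2 : ∀ p ∈ a.finite.2.toFinset, ∀ q ∈ a.finite.2.toFinset,
      (a.elt⁻¹ * p.1, p.2) = (a.elt⁻¹ * q.1, q.2) → p = q := by
    intro p _ q _ h
    have h1 := congrArg Prod.fst h
    have h2 := congrArg Prod.snd h
    exact Prod.ext_iff.mpr ⟨mul_left_cancel h1, h2⟩
  show (a⁻¹).finite.1.toFinset.prod (Pv ν) * (a⁻¹).finite.2.toFinset.prod (Qe ν f φ hν) = _
  rw [hv, he, Finset.prod_image hinj1, Finset.prod_image hinj2]

lemma Efun_maxElt (g : G) : Efun ν f φ hν (maxElt φ g) = Pv ν g := by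
  classical
  have hv : (maxElt φ g).finite.1.toFinset = insert (1 : G) {g} := by
    ext y
    simp [Set.Finite.mem_toFinset, maxElt, deltaG]
  have he : (maxElt φ g).finite.2.toFinset = (∅ : Finset (G × X)) := by
    ext y
    simp [Set.Finite.mem_toFinset, maxElt, deltaG]
  show (maxElt φ g).finite.1.toFinset.prod (Pv ν)
    * (maxElt φ g).finite.2.toFinset.prod (Qe ν f φ hν) = _
  rw [hv, he, Finset.prod_empty, mul_one, prod_pair_idem, Pv_one, one_mul]

lemma Efun_one : Efun ν f φ hν (1 : FExp φ) = 1 := by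
  have h1 : (1 : FExp φ) = maxElt φ 1 := FExp.ext' rfl rfl
  rw [h1, Efun_maxElt, Pv_one]

lemma Efun_gen (x : X) :
    Efun ν f φ hν (genElt φ x) = Pv ν (φ x) * Qe ν f φ hν (1, x) := by
  classical
  have hv : (genElt φ x).finite.1.toFinset = insert (1 : G) {1 * φ x} := by
    ext y
    simp [Set.Finite.mem_toFinset, genElt, edgeG]
  have he : (genElt φ x).finite.2.toFinset = {((1 : G), x)} := by
    ext y
    simp [Set.Finite.mem_toFinset, genElt, edgeG]
  show (genElt φ x).finite.1.toFinset.prod (Pv ν)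
    * (genElt φ x).finite.2.toFinset.prod (Qe ν f φ hν) = _
  rw [hv, he, Finset.prod_singleton, prod_pair_idem, Pv_one, one_mul, one_mul]

lemma hmap_one : hmap ν f φ hν (1 : FExp φ) = 1 := by
  show (Efun ν f φ hν 1).1 * Mg ν (1 : FExp φ).elt = 1
  rw [Efun_one]
  show (1 : F) * Mg ν 1 = 1
  rw [one_mul, Mg_one]

lemma hmap_sigma (a : FExp φ) : σclass (hmap ν f φ hν a) = ν a.elt := by
  have hs : sigma ((Efun ν f φ hν a).1 * Mg ν a.elt) (1 * Mg ν a.elt) :=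
    sigma_mul_right _ ⟨(Efun ν f φ hν a).1, (Efun ν f φ hν a).2,
      by rw [(Efun ν f φ hν a).2, one_mul]⟩
  calc σclass (hmap ν f φ hν a) = σclass (1 * Mg ν a.elt) := Quotient.sound hs
  _ = σclass (Mg ν a.elt) := by rw [one_mul]
  _ = ν a.elt := σclass_Mg ν a.elt

lemma hmap_mx (a : FExp φ) : hmap ν f φ hν (mxOp a) = mx (hmap ν f φ hν a) := by
  have h1 : hmap ν f φ hν (mxOp a) = Mg ν a.elt := by
    show (Efun ν f φ hν (maxElt φ a.elt)).1 * Mg ν (maxElt φ a.elt).elt = _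
    rw [Efun_maxElt]
    exact InverseMonoid.mul_inv_self_mul _
  have hs : sigma ((Efun ν f φ hν a).1 * Mg ν a.elt) (1 * Mg ν a.elt) :=
    sigma_mul_right _ ⟨(Efun ν f φ hν a).1, (Efun ν f φ hν a).2,
      by rw [(Efun ν f φ hν a).2, one_mul]⟩
  have h2 := mx_eq_of_sigma hs
  rw [one_mul] at h2
  rw [h1]
  show Mg ν a.elt = mx ((Efun ν f φ hν a).1 * Mg ν a.elt)
  rw [h2]
  exact (mx_MQ (ν a.elt)).symm

lemma hmap_gen (x : X) : hmap ν f φ hν (genElt φ x) = f x := by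
  show (Efun ν f φ hν (genElt φ x)).1 * Mg ν (φ x) = f x
  rw [Efun_gen]
  show Mg ν (φ x) * (Mg ν (φ x))⁻¹ * (Mg ν 1 * f x * (Mg ν (1 * φ x))⁻¹) * Mg ν (φ x) = f x
  rw [Mg_one, one_mul (f x), one_mul (φ x)]
  exact sandwich (nle_MQ (hν x).symm)

lemma hmap_mul (a b : FExp φ) :
    hmap ν f φ hν (a * b) = hmap ν f φ hν a * hmap ν f φ hν b := by
  classical
  set g := a.elt with hg
  set g' := b.elt with hg'
  set Ea := Efun ν f φ hν a with hEa
  set Eb := Efun ν f φ hν b with hEb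
  set Ptr := b.finite.1.toFinset.prod (fun v => Pv ν (g * v)) with hPtr
  set Qtr := b.finite.2.toFinset.prod (fun e => Qe ν f φ hν (g * e.1, e.2)) with hQtr
  have hS2 : Mg ν g * Eb.1 = (Cj ν g Eb).1 * Mg ν g := idem_shift Eb.2 (Mg ν g)
  have hRHS : hmap ν f φ hν a * hmap ν f φ hν b
      = (Ea * Cj ν g Eb * eps ν g g').1 * Mg ν (g * g') := by
    show Ea.1 * Mg ν g * (Eb.1 * Mg ν g') = _
    calc Ea.1 * Mg ν g * (Eb.1 * Mg ν g')
        = Ea.1 * (Mg ν g * Eb.1) * Mg ν g' := by simp only [mul_assoc]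
    _ = Ea.1 * ((Cj ν g Eb).1 * Mg ν g) * Mg ν g' := by rw [hS2]
    _ = Ea.1 * (Cj ν g Eb).1 * (Mg ν g * Mg ν g') := by simp only [mul_assoc]
    _ = Ea.1 * (Cj ν g Eb).1 * ((eps ν g g').1 * Mg ν (g * g')) := by
        rw [eps_mul_Mg ν g g']
    _ = (Ea * Cj ν g Eb * eps ν g g').1 * Mg ν (g * g') := by
        simp only [Idem.mul_val, mul_assoc]
  have hLHS : hmap ν f φ hν (a * b) = (Ea * (Ptr * Qtr)).1 * Mg ν (g * g') := by
    show (Efun ν f φ hν (a * b)).1 * Mg ν (a * b).elt = _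
    rw [Efun_mul]
    rfl
  have hone : (1 : G) ∈ b.finite.1.toFinset := by
    rw [Set.Finite.mem_toFinset]; exact b.one_mem
  have hPg : Ptr * Qtr * Pv ν g = Ptr * Qtr := by
    have h1 : ile (Ptr * Qtr) (Pv ν (g * 1)) :=
      ile_trans (ile_mul_left _ _) (prod_ile _ hone)
    rw [mul_one] at h1
    exact h1
  have htr : Ptr * Qtr * Pv ν g = Cj ν g Eb * Pv ν g :=
    transl_eq ν f φ hν g b.finite.1.toFinset b.finite.2.toFinset
  have hCP : Cj ν g Eb * Pv ν g = Cj ν g Eb := ile_Cj_Pv ν g Eb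
  have heps : Cj ν g Eb * Pv ν (g * g') * eps ν g g' = Cj ν g Eb * Pv ν (g * g') :=
    ile_trans (ile_mul_compat (Pv ν (g * g')) (ile_Cj_Pv ν g Eb)) (K5 ν g g')
  have key : Ptr * Qtr * Pv ν (g * g') = Cj ν g Eb * eps ν g g' * Pv ν (g * g') := by
    calc Ptr * Qtr * Pv ν (g * g')
        = (Ptr * Qtr * Pv ν g) * Pv ν (g * g') := by rw [hPg]
    _ = (Cj ν g Eb * Pv ν g) * Pv ν (g * g') := by rw [htr]
    _ = Cj ν g Eb * Pv ν (g * g') := by rw [hCP]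
    _ = Cj ν g Eb * Pv ν (g * g') * eps ν g g' := heps.symm
    _ = Cj ν g Eb * eps ν g g' * Pv ν (g * g') := mul_right_comm _ _ _
  rw [hLHS, hRHS]
  refine mul_eq_of_mul_pg ?_
  have final : Ea * (Ptr * Qtr) * Pv ν (g * g')
      = Ea * Cj ν g Eb * eps ν g g' * Pv ν (g * g') := by
    calc Ea * (Ptr * Qtr) * Pv ν (g * g')
        = Ea * (Ptr * Qtr * Pv ν (g * g')) := by rw [mul_assoc]
    _ = Ea * (Cj ν g Eb * eps ν g g' * Pv ν (g * g')) := by rw [key]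
    _ = Ea * Cj ν g Eb * eps ν g g' * Pv ν (g * g') := by simp only [mul_assoc]
  exact congrArg Subtype.val final

lemma hmap_inv (a : FExp φ) : hmap ν f φ hν a⁻¹ = (hmap ν f φ hν a)⁻¹ := by
  classical
  set g := a.elt with hg
  set Ea := Efun ν f φ hν a with hEa
  set Ptr := a.finite.1.toFinset.prod (fun v => Pv ν (g⁻¹ * v)) with hPtr
  set Qtr := a.finite.2.toFinset.prod (fun e => Qe ν f φ hν (g⁻¹ * e.1, e.2)) with hQtr
  have hRHS : (hmap ν f φ hν a)⁻¹ = (Cj ν g⁻¹ Ea).1 * Mg ν g⁻¹ := by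
    show (Ea.1 * Mg ν g)⁻¹ = _
    rw [InverseMonoid.mul_inv_rev, idem_inv Ea.2, ← Mg_inv]
    exact idem_shift Ea.2 (Mg ν g⁻¹)
  have hLHS : hmap ν f φ hν a⁻¹ = (Ptr * Qtr).1 * Mg ν g⁻¹ := by
    show (Efun ν f φ hν a⁻¹).1 * Mg ν (a⁻¹).elt = _
    rw [Efun_inv]
    rfl
  have htr : Ptr * Qtr * Pv ν g⁻¹ = Cj ν g⁻¹ Ea * Pv ν g⁻¹ :=
    transl_eq ν f φ hν g⁻¹ a.finite.1.toFinset a.finite.2.toFinset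
  rw [hLHS, hRHS]
  exact mul_eq_of_mul_pg (congrArg Subtype.val htr)

end EfunSec


/-- Let `G` be an `X`-generated group and `F` an `X`-generated F-inverse
monoid admitting a canonical morphism `ν : G → F/σ` (`ν (x_G)` is the σ-class of `x_F`).
Then there is a canonical morphism `φ : F(G) → F` of F-inverse monoids (preserving `·`,
`⁻¹`, `m` and `1` and sending `(Γ_x, x_G)` to `x_F`) such that the square commutes: the
σ-class of the image of `(Γ,g)` equals `ν g`. -/
theorem statement13 {G : Type u} [Group G] {X : Type v} (φ : X → G)
    (hG : Subgroup.closure (Set.range φ) = ⊤)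
    {F : Type w} [FInverseMonoid F] (f : X → F)
    (hF : ∀ T : Set F, (∀ x : X, f x ∈ T) → (1 : F) ∈ T →
      (∀ a ∈ T, ∀ b ∈ T, a * b ∈ T) → (∀ a ∈ T, a⁻¹ ∈ T) → (∀ a ∈ T, mx a ∈ T) →
      ∀ s : F, s ∈ T)
    (ν : G →* GQuot F) (hν : ∀ x : X, ν (φ x) = σclass (f x)) :
    ∃ h : FExp φ → F,
      h 1 = 1 ∧
      (∀ a b : FExp φ, h (a * b) = h a * h b) ∧
      (∀ a : FExp φ, h a⁻¹ = (h a)⁻¹) ∧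
      (∀ a : FExp φ, h (mxOp a) = mx (h a)) ∧
      (∀ x : X, h (genElt φ x) = f x) ∧
      ∀ a : FExp φ, σclass (h a) = ν a.elt := by
  exact ⟨hmap ν f φ hν, hmap_one ν f φ hν, hmap_mul ν f φ hν, hmap_inv ν f φ hν,
    hmap_mx ν f φ hν, hmap_gen ν f φ hν, hmap_sigma ν f φ hν⟩

end FInvPaper
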